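/- Let x* ∈ ℝ, δ > 0, λ₁ > 0, λ₂ > 0, and let u : ℝ → ℝ be continuous at x*, three times continuously differentiable on [x* − δ, x*] and on [x*, x* + δ] (with one-sided derivatives at x*), with |u'''| ≤ M on both intervals, and suppose the ideal contact condition λ₁·u'(x*−) = λ₂·u'(x*+) holds. Let h, h', k, k' > 0 with h + h' ≤ δ and k + k' ≤ δ, and suppose the mesh ratios satisfy h/h' ≤ Q and k/k' ≤ Q. Then the residual of the discrete inner-boundary flux condition satisfies | λ₁·( h'(2h + h')u(x*) − (h + h')²u(x* − h) + h²u(x* − h − h') ) / ( h h'(h + h') ) + λ₂·( k'(2k + k')u(x*) − (k + k')²u(x* + k) + k²u(x* + k + k') ) / ( k k'(k + k') ) | ≤ C·(max(h + h', k + k'))², where C depends only on λ₁, λ₂, M, and Q. -/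

import Mathlib

lemma taylor2_two_sided {f : ℝ → ℝ} {a b M : ℝ} (hab : a < b)
    (hf : ContDiffOn ℝ 3 f (Set.Icc a b))
    (hM : ∀ ξ ∈ Set.Icc a b, |iteratedDerivWithin 3 f (Set.Icc a b) ξ| ≤ M)
    {x y : ℝ} (hx : x ∈ Set.Icc a b) (hy : y ∈ Set.Icc a b) :
    |f x - f y - derivWithin f (Set.Icc a b) y * (x - y)
        - iteratedDerivWithin 2 f (Set.Icc a b) y * (x - y) ^ 2 / 2|
      ≤ M / 2 * |x - y| ^ 3 := by
  set s : Set ℝ := Set.Icc a b with hs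
  have hud : UniqueDiffOn ℝ s := uniqueDiffOn_Icc hab
  have hx' : x ∈ Set.uIcc a b := by rwa [Set.uIcc_of_le hab.le]
  have hy' : y ∈ Set.uIcc a b := by rwa [Set.uIcc_of_le hab.le]
  have hsub : Set.uIcc x y ⊆ s := by
    rw [hs, ← Set.uIcc_of_le hab.le]; exact Set.uIcc_subset_uIcc hx' hy'
  have hf2 : ContDiffOn ℝ 2 f s := hf.of_le (by norm_num)
  have hdiff2 : DifferentiableOn ℝ (iteratedDerivWithin 2 f s) s :=
    hf.differentiableOn_iteratedDerivWithin (by norm_num) hud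
  have hderiv : ∀ t ∈ Set.uIcc x y,
      HasDerivWithinAt (fun z => taylorWithinEval f 2 s z x)
        (((Nat.factorial 2 : ℝ)⁻¹ * (x - t) ^ 2) • iteratedDerivWithin 3 f s t) (Set.uIcc x y) t := by
    intro t ht
    exact (hasDerivWithinAt_taylorWithinEval_at_Icc x hab (hsub ht) hf2 hdiff2).mono hsub
  have hbound : ∀ t ∈ Set.uIcc x y,
      ‖((Nat.factorial 2 : ℝ)⁻¹ * (x - t) ^ 2) • iteratedDerivWithin 3 f s t‖
        ≤ M / 2 * |x - y| ^ 2 := by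
    intro t ht
    have h1 : |x - t| ≤ |x - y| := by
      have := Set.abs_sub_left_of_mem_uIcc ht
      rwa [abs_sub_comm t x, abs_sub_comm y x] at this
    have h2 : |iteratedDerivWithin 3 f s t| ≤ M := hM t (hsub ht)
    have h3 : (0:ℝ) ≤ M := le_trans (abs_nonneg _) h2
    rw [smul_eq_mul, Real.norm_eq_abs, abs_mul, abs_mul]
    have : |(Nat.factorial 2 : ℝ)⁻¹| = 1/2 := by norm_num [Nat.factorial]
    rw [this, abs_pow]
    calc 1/2 * |x - t| ^ 2 * |iteratedDerivWithin 3 f s t|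
        ≤ 1/2 * |x - y| ^ 2 * M := by
          apply mul_le_mul _ h2 (abs_nonneg _) (by positivity)
          gcongr
      _ = M / 2 * |x - y| ^ 2 := by ring
  have key := Convex.norm_image_sub_le_of_norm_hasDerivWithin_le hderiv hbound
    (convex_uIcc x y) (Set.left_mem_uIcc) (Set.right_mem_uIcc)
  rw [taylorWithinEval_self] at key
  have hexp : taylorWithinEval f 2 s y x
      = f y + derivWithin f s y * (x - y)
        + iteratedDerivWithin 2 f s y * (x - y) ^ 2 / 2 := by
    rw [taylor_within_apply]
    simp [Finset.sum_range_succ, iteratedDerivWithin_one, Nat.factorial]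
    ring
  rw [hexp] at key
  calc |f x - f y - derivWithin f s y * (x - y)
        - iteratedDerivWithin 2 f s y * (x - y) ^ 2 / 2|
      = ‖(f y + derivWithin f s y * (x - y)
          + iteratedDerivWithin 2 f s y * (x - y) ^ 2 / 2) - f x‖ := by
        rw [Real.norm_eq_abs, abs_sub_comm]; ring_nf
    _ ≤ M / 2 * |x - y| ^ 2 * ‖y - x‖ := key
    _ = M / 2 * |x - y| ^ 3 := by
        rw [Real.norm_eq_abs, abs_sub_comm]; ring
set_option maxHeartbeats 1600000 in
theorem inner_boundary_flux_condition_second_order_consistency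
    (l₁ l₂ M Q : ℝ) (hl₁ : 0 < l₁) (hl₂ : 0 < l₂) :
    ∃ C : ℝ, 0 < C ∧
      ∀ (xs δ : ℝ) (u : ℝ → ℝ), 0 < δ →
        ContinuousAt u xs →
        ContDiffOn ℝ 3 u (Set.Icc (xs - δ) xs) →
        ContDiffOn ℝ 3 u (Set.Icc xs (xs + δ)) →
        (∀ ξ ∈ Set.Icc (xs - δ) xs,
          |iteratedDerivWithin 3 u (Set.Icc (xs - δ) xs) ξ| ≤ M) →
        (∀ ξ ∈ Set.Icc xs (xs + δ),
          |iteratedDerivWithin 3 u (Set.Icc xs (xs + δ)) ξ| ≤ M) →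
        l₁ * derivWithin u (Set.Icc (xs - δ) xs) xs
          = l₂ * derivWithin u (Set.Icc xs (xs + δ)) xs →
        ∀ h h' k k' : ℝ, 0 < h → 0 < h' → 0 < k → 0 < k' →
          h + h' ≤ δ → k + k' ≤ δ → h / h' ≤ Q → k / k' ≤ Q →
          |l₁ * ((h' * (2 * h + h') * u xs - (h + h') ^ 2 * u (xs - h)
                + h ^ 2 * u (xs - h - h')) / (h * h' * (h + h')))
            + l₂ * ((k' * (2 * k + k') * u xs - (k + k') ^ 2 * u (xs + k)
                + k ^ 2 * u (xs + k + k')) / (k * k' * (k + k')))|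
            ≤ C * (max (h + h') (k + k')) ^ 2 := by
  refine ⟨(l₁ + l₂) * (|M| * |Q| + 1), by positivity, ?_⟩
  intro xs δ u hδ _hc hf₁ hf₂ hM₁ hM₂ hcontact h h' k k' hh hh' hk hk' hhδ hkδ hQ₁ hQ₂
  have hab₁ : xs - δ < xs := by linarith
  have hab₂ : xs < xs + δ := by linarith
  set s₁ : Set ℝ := Set.Icc (xs - δ) xs with hs₁
  set s₂ : Set ℝ := Set.Icc xs (xs + δ) with hs₂
  set A := derivWithin u s₁ xs with hA
  set B := iteratedDerivWithin 2 u s₁ xs with hB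
  set A' := derivWithin u s₂ xs with hA'
  set B' := iteratedDerivWithin 2 u s₂ xs with hB'
  have hm0 : xs ∈ s₁ := ⟨by linarith, le_refl _⟩
  have hm1 : xs - h ∈ s₁ := ⟨by linarith, by linarith⟩
  have hm2 : xs - h - h' ∈ s₁ := ⟨by linarith, by linarith⟩
  have hn0 : xs ∈ s₂ := ⟨le_refl _, by linarith⟩
  have hn1 : xs + k ∈ s₂ := ⟨by linarith, by linarith⟩
  have hn2 : xs + k + k' ∈ s₂ := ⟨by linarith, by linarith⟩
  have hM0 : (0:ℝ) ≤ M := (abs_nonneg _).trans (hM₁ xs hm0)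
  have hQh : h ≤ Q * h' := (div_le_iff₀ hh').mp hQ₁
  have hQk : k ≤ Q * k' := (div_le_iff₀ hk').mp hQ₂
  have hQ0 : (0:ℝ) < Q := lt_of_lt_of_le (div_pos hh hh') hQ₁
  -- Taylor remainders
  set E₁ := u (xs - h) - u xs + h * A - B * h ^ 2 / 2 with hE₁def
  set E₂ := u (xs - h - h') - u xs + (h + h') * A - B * (h + h') ^ 2 / 2 with hE₂def
  set F₁ := u (xs + k) - u xs - k * A' - B' * k ^ 2 / 2 with hF₁def
  set F₂ := u (xs + k + k') - u xs - (k + k') * A' - B' * (k + k') ^ 2 / 2 with hF₂def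
  have hE₁ : |E₁| ≤ M / 2 * h ^ 3 := by
    have t := taylor2_two_sided hab₁ hf₁ hM₁ hm1 hm0
    rw [show xs - h - xs = -h by ring] at t
    rw [abs_neg, abs_of_pos hh] at t
    rw [show E₁ = u (xs - h) - u xs - A * (-h) - B * (-h) ^ 2 / 2 by rw [hE₁def]; ring]
    exact t
  have hE₂ : |E₂| ≤ M / 2 * (h + h') ^ 3 := by
    have t := taylor2_two_sided hab₁ hf₁ hM₁ hm2 hm0
    rw [show xs - h - h' - xs = -(h + h') by ring] at t
    rw [abs_neg, abs_of_pos (by linarith : (0:ℝ) < h + h')] at t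
    rw [show E₂ = u (xs - h - h') - u xs - A * (-(h + h')) - B * (-(h + h')) ^ 2 / 2
      by rw [hE₂def]; ring]
    exact t
  have hF₁ : |F₁| ≤ M / 2 * k ^ 3 := by
    have t := taylor2_two_sided hab₂ hf₂ hM₂ hn1 hn0
    rw [show xs + k - xs = k by ring] at t
    rw [abs_of_pos hk] at t
    rw [show F₁ = u (xs + k) - u xs - A' * k - B' * k ^ 2 / 2 by rw [hF₁def]; ring]
    exact t
  have hF₂ : |F₂| ≤ M / 2 * (k + k') ^ 3 := by
    have t := taylor2_two_sided hab₂ hf₂ hM₂ hn2 hn0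
    rw [show xs + k + k' - xs = k + k' by ring] at t
    rw [abs_of_pos (by linarith : (0:ℝ) < k + k')] at t
    rw [show F₂ = u (xs + k + k') - u xs - A' * (k + k') - B' * (k + k') ^ 2 / 2
      by rw [hF₂def]; ring]
    exact t
  -- value rewrites
  have hu1 : u (xs - h) = u xs - h * A + B * h ^ 2 / 2 + E₁ := by rw [hE₁def]; ring
  have hu2 : u (xs - h - h') = u xs - (h + h') * A + B * (h + h') ^ 2 / 2 + E₂ := by
    rw [hE₂def]; ring
  have hu3 : u (xs + k) = u xs + k * A' + B' * k ^ 2 / 2 + F₁ := by rw [hF₁def]; ring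
  have hu4 : u (xs + k + k') = u xs + (k + k') * A' + B' * (k + k') ^ 2 / 2 + F₂ := by
    rw [hF₂def]; ring
  have hd₁ : h * h' * (h + h') ≠ 0 := by positivity
  have hd₂ : k * k' * (k + k') ≠ 0 := by positivity
  have hzero : l₁ * A - l₂ * A' = 0 := sub_eq_zero.mpr hcontact
  have hid : l₁ * ((h' * (2 * h + h') * u xs - (h + h') ^ 2 * u (xs - h)
        + h ^ 2 * u (xs - h - h')) / (h * h' * (h + h')))
      + l₂ * ((k' * (2 * k + k') * u xs - (k + k') ^ 2 * u (xs + k)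
        + k ^ 2 * u (xs + k + k')) / (k * k' * (k + k')))
      = l₁ * ((-(h + h') ^ 2 * E₁ + h ^ 2 * E₂) / (h * h' * (h + h')))
        + l₂ * ((-(k + k') ^ 2 * F₁ + k ^ 2 * F₂) / (k * k' * (k + k')))
        + (l₁ * A - l₂ * A') := by
    rw [hu1, hu2, hu3, hu4]
    field_simp
    ring
  rw [hid, hzero, add_zero]
  -- bounds on each remainder term
  set m := max (h + h') (k + k') with hm
  have hm1' : h + h' ≤ m := le_max_left _ _
  have hm2' : k + k' ≤ m := le_max_right _ _
  have hmpos : (0:ℝ) < m := lt_of_lt_of_le (by linarith) hm1'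
  have hbnd : ∀ a a' : ℝ, 0 < a → 0 < a' → a ≤ Q * a' → a + a' ≤ m →
      ∀ X Y : ℝ, |X| ≤ M / 2 * a ^ 3 → |Y| ≤ M / 2 * (a + a') ^ 3 →
      |(-(a + a') ^ 2 * X + a ^ 2 * Y) / (a * a' * (a + a'))| ≤ (|M| * |Q| + 1) * m ^ 2 := by
    intro a a' ha ha' haQ ham X Y hX hY
    have hden : (0:ℝ) < a * a' * (a + a') := by positivity
    rw [abs_div, abs_of_pos hden]
    rw [div_le_iff₀ hden]
    have habs : |(-(a + a') ^ 2 * X + a ^ 2 * Y)|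
        ≤ (a + a') ^ 2 * (M / 2 * a ^ 3) + a ^ 2 * (M / 2 * (a + a') ^ 3) := by
      calc |(-(a + a') ^ 2 * X + a ^ 2 * Y)| ≤ |(-(a + a') ^ 2 * X)| + |a ^ 2 * Y| :=
            abs_add_le _ _
        _ = (a + a') ^ 2 * |X| + a ^ 2 * |Y| := by
            rw [abs_mul, abs_mul, abs_neg, abs_pow, abs_pow, abs_of_pos ha,
              abs_of_pos (by linarith : (0:ℝ) < a + a')]
        _ ≤ (a + a') ^ 2 * (M / 2 * a ^ 3) + a ^ 2 * (M / 2 * (a + a') ^ 3) := by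
            gcongr
    refine habs.trans ?_
    have step1 : (a + a') ^ 2 * (M / 2 * a ^ 3) + a ^ 2 * (M / 2 * (a + a') ^ 3)
        = M / 2 * (a * a) * ((a + a') ^ 2 * (2 * a + a')) := by ring
    have step2 : M / 2 * (a * a) * ((a + a') ^ 2 * (2 * a + a'))
        ≤ M / 2 * ((Q * a') * a) * ((a + a') ^ 2 * (2 * (a + a'))) := by
      have t1 : a * a ≤ Q * a' * a := mul_le_mul_of_nonneg_right haQ ha.le
      have t2 : (a + a') ^ 2 * (2 * a + a') ≤ (a + a') ^ 2 * (2 * (a + a')) :=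
        mul_le_mul_of_nonneg_left (by linarith) (sq_nonneg _)
      calc M / 2 * (a * a) * ((a + a') ^ 2 * (2 * a + a'))
          = M / 2 * ((a * a) * ((a + a') ^ 2 * (2 * a + a'))) := by ring
        _ ≤ M / 2 * ((Q * a' * a) * ((a + a') ^ 2 * (2 * (a + a')))) := by
            apply mul_le_mul_of_nonneg_left _ (by linarith : (0:ℝ) ≤ M / 2)
            exact mul_le_mul t1 t2 (by positivity) (by positivity)
        _ = M / 2 * ((Q * a') * a) * ((a + a') ^ 2 * (2 * (a + a'))) := by ring
    have step3 : M / 2 * ((Q * a') * a) * ((a + a') ^ 2 * (2 * (a + a')))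
        = (M * Q * (a + a') ^ 2) * (a * a' * (a + a')) := by ring
    rw [step1]
    refine step2.trans ?_
    rw [step3]
    have hMQ : M * Q ≤ |M| * |Q| + 1 := by
      have := mul_le_mul (le_abs_self M) (le_abs_self Q) hQ0.le (abs_nonneg M)
      linarith
    have haam : (a + a') ^ 2 ≤ m ^ 2 := by
      have := pow_le_pow_left₀ (by linarith : (0:ℝ) ≤ a + a') ham 2
      simpa using this
    have hfin : M * Q * (a + a') ^ 2 ≤ (|M| * |Q| + 1) * m ^ 2 := by
      calc M * Q * (a + a') ^ 2 ≤ (|M| * |Q| + 1) * (a + a') ^ 2 :=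
            mul_le_mul_of_nonneg_right hMQ (sq_nonneg _)
        _ ≤ (|M| * |Q| + 1) * m ^ 2 :=
            mul_le_mul_of_nonneg_left haam (by positivity)
    exact mul_le_mul_of_nonneg_right hfin hden.le
  have b₁ := hbnd h h' hh hh' hQh hm1' E₁ E₂ hE₁ hE₂
  have b₂ := hbnd k k' hk hk' hQk hm2' F₁ F₂ hF₁ hF₂
  calc |l₁ * ((-(h + h') ^ 2 * E₁ + h ^ 2 * E₂) / (h * h' * (h + h')))
        + l₂ * ((-(k + k') ^ 2 * F₁ + k ^ 2 * F₂) / (k * k' * (k + k')))|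
      ≤ l₁ * |(-(h + h') ^ 2 * E₁ + h ^ 2 * E₂) / (h * h' * (h + h'))|
        + l₂ * |(-(k + k') ^ 2 * F₁ + k ^ 2 * F₂) / (k * k' * (k + k'))| := by
        refine (abs_add_le _ _).trans ?_
        rw [abs_mul, abs_mul, abs_of_pos hl₁, abs_of_pos hl₂]
    _ ≤ l₁ * ((|M| * |Q| + 1) * m ^ 2) + l₂ * ((|M| * |Q| + 1) * m ^ 2) :=
        add_le_add (mul_le_mul_of_nonneg_left b₁ hl₁.le)
          (mul_le_mul_of_nonneg_left b₂ hl₂.le)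
    _ = (l₁ + l₂) * (|M| * |Q| + 1) * m ^ 2 := by ring
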